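/- Let W be a complex Hilbert space, A = B(W) the C*-algebra of bounded linear operators on W, and M a Hilbert C*-module over A. Let n ∈ ℕ, let w_1,…,w_n ∈ M satisfy that ⟨w_i, w_j⟩ is a compact operator for all i, j, and let ε > 0. Then there exist q_1,…,q_n ∈ M, each either 0 or normalized and mutually orthogonal (⟨q_i,q_j⟩ = 0 for i ≠ j), an upper triangular matrix R ∈ A^{n×n}, and a matrix R_inv ∈ A^{n×n}, such that q_j = Σ_{i=1}^n w_i (R_inv)_{ij} for every j and ‖ w_j − Σ_{i=1}^n q_i R_{ij} ‖_M ≤ ε for every j = 1,…,n. -/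

import Mathlib

/-- A (right) Hilbert C*-module over a C*-algebra `A`: a right `A`-module `M` with an
`A`-valued inner product, `A`-linear in the second variable, satisfying the listed axioms,
whose norm is `‖u‖ = ‖⟨u,u⟩‖^(1/2)` (so that completeness of `M` as a normed group is
completeness for this norm). -/
structure HilbertCStarModule (A : Type*) (M : Type*) [CStarAlgebra A] [PartialOrder A]
    [StarOrderedRing A] [NormedAddCommGroup M] where
  smul : M → A → M
  inner : M → M → A
  add_smul : ∀ (u v : M) (c : A), smul (u + v) c = smul u c + smul v c
  smul_add : ∀ (u : M) (c d : A), smul u (c + d) = smul u c + smul u d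
  smul_mul : ∀ (u : M) (c d : A), smul u (c * d) = smul (smul u c) d
  smul_one : ∀ u : M, smul u 1 = u
  inner_add_right : ∀ u v w : M, inner u (v + w) = inner u v + inner u w
  inner_smul_right : ∀ (u v : M) (c : A), inner u (smul v c) = inner u v * c
  star_inner : ∀ u v : M, star (inner u v) = inner v u
  inner_self_nonneg : ∀ u : M, 0 ≤ inner u u
  inner_self_eq_zero : ∀ u : M, inner u u = 0 → u = 0
  norm_eq : ∀ u : M, ‖u‖ = Real.sqrt ‖inner u u‖

namespace HilbertCStarModule

variable {A M : Type*} [CStarAlgebra A] [PartialOrder A] [StarOrderedRing A]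
  [NormedAddCommGroup M] (H : HilbertCStarModule A M)

lemma smul_zero' (u : M) : H.smul u 0 = 0 := by
  have h := H.smul_add u 0 0
  rw [add_zero] at h
  exact (left_eq_add.mp h)

lemma zero_smul' (c : A) : H.smul 0 c = 0 := by
  have h := H.add_smul 0 0 c
  rw [add_zero] at h
  exact (left_eq_add.mp h)

lemma inner_zero_right (u : M) : H.inner u 0 = 0 := by
  have h := H.inner_add_right u 0 0
  rw [add_zero] at h
  exact (left_eq_add.mp h)

lemma inner_zero_left (u : M) : H.inner 0 u = 0 := by
  rw [← H.star_inner, H.inner_zero_right, star_zero]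

lemma inner_add_left (u v x : M) : H.inner (u + v) x = H.inner u x + H.inner v x := by
  rw [← H.star_inner, H.inner_add_right, star_add, H.star_inner, H.star_inner]

lemma inner_smul_left (u v : M) (c : A) :
    H.inner (H.smul u c) v = star c * H.inner u v := by
  rw [← H.star_inner, H.inner_smul_right, star_mul, H.star_inner]

lemma inner_neg_right (u v : M) : H.inner u (-v) = -H.inner u v := by
  have h := H.inner_add_right u v (-v)
  rw [add_neg_cancel, H.inner_zero_right] at h
  linear_combination (norm := module) -h

lemma inner_neg_left (u v : M) : H.inner (-u) v = -H.inner u v := by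
  rw [← H.star_inner, H.inner_neg_right, star_neg, H.star_inner]

lemma inner_sub_right (u v x : M) : H.inner u (v - x) = H.inner u v - H.inner u x := by
  rw [sub_eq_add_neg, H.inner_add_right, H.inner_neg_right, sub_eq_add_neg]

lemma inner_sub_left (u v x : M) : H.inner (u - v) x = H.inner u x - H.inner v x := by
  rw [sub_eq_add_neg, H.inner_add_left, H.inner_neg_left, sub_eq_add_neg]

lemma inner_sum_right {ι : Type*} (s : Finset ι) (u : M) (f : ι → M) :
    H.inner u (∑ i ∈ s, f i) = ∑ i ∈ s, H.inner u (f i) := by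
  classical
  induction s using Finset.induction_on with
  | empty => simp [H.inner_zero_right]
  | @insert _ _ h ih => rw [Finset.sum_insert h, Finset.sum_insert h, H.inner_add_right, ih]

lemma inner_sum_left {ι : Type*} (s : Finset ι) (u : M) (f : ι → M) :
    H.inner (∑ i ∈ s, f i) u = ∑ i ∈ s, H.inner (f i) u := by
  classical
  induction s using Finset.induction_on with
  | empty => simp [H.inner_zero_left]
  | @insert _ _ h ih => rw [Finset.sum_insert h, Finset.sum_insert h, H.inner_add_left, ih]

lemma sum_smul' {ι : Type*} (s : Finset ι) (f : ι → M) (c : A) :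
    H.smul (∑ i ∈ s, f i) c = ∑ i ∈ s, H.smul (f i) c := by
  classical
  induction s using Finset.induction_on with
  | empty => simp [H.zero_smul']
  | @insert _ _ h ih => rw [Finset.sum_insert h, Finset.sum_insert h, H.add_smul, ih]

lemma smul_sum' {ι : Type*} (s : Finset ι) (u : M) (c : ι → A) :
    H.smul u (∑ i ∈ s, c i) = ∑ i ∈ s, H.smul u (c i) := by
  classical
  induction s using Finset.induction_on with
  | empty => simp [H.smul_zero']
  | @insert _ _ h ih => rw [Finset.sum_insert h, Finset.sum_insert h, H.smul_add, ih]

lemma neg_smul' (u : M) (c : A) : H.smul (-u) c = -H.smul u c := by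
  have h := H.add_smul u (-u) c
  rw [add_neg_cancel, H.zero_smul'] at h
  linear_combination (norm := module) -h

lemma smul_neg' (u : M) (c : A) : H.smul u (-c) = -H.smul u c := by
  have h := H.smul_add u c (-c)
  rw [add_neg_cancel, H.smul_zero'] at h
  linear_combination (norm := module) -h

/-- star of a self inner product -/
lemma star_inner_self (u : M) : star (H.inner u u) = H.inner u u := H.star_inner u u

/-- If `⟨q,q⟩` is idempotent then `q • ⟨q,q⟩ = q`. -/
lemma smul_inner_self_of_idem (q : M)
    (hidem : H.inner q q * H.inner q q = H.inner q q) :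
    H.smul q (H.inner q q) = q := by
  set p := H.inner q q with hp
  have hps : star p = p := H.star_inner q q
  have hz : H.inner (H.smul q p - q) (H.smul q p - q) = 0 := by
    rw [H.inner_sub_right, H.inner_sub_left, H.inner_sub_left,
      H.inner_smul_right, H.inner_smul_right, H.inner_smul_left, ← hp, hps]
    have h3 : p * p * p = p := by rw [hidem, hidem]
    rw [h3, hidem]
    abel
  have := H.inner_self_eq_zero _ hz
  rwa [sub_eq_zero] at this

end HilbertCStarModule
open scoped InnerProductSpace

namespace QRGap

/-- A "hat" bump function centered at `m` with radius `r`. -/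
noncomputable def hat (m r t : ℝ) : ℝ := max 0 (1 - |t - m| / r)

lemma hat_continuous (m r : ℝ) : Continuous (hat m r) := by
  unfold hat; fun_prop

lemma hat_nonneg (m r t : ℝ) : 0 ≤ hat m r t := le_max_left _ _

lemma hat_le_one (m r t : ℝ) (hr : 0 < r) : hat m r t ≤ 1 := by
  unfold hat
  apply max_le (by norm_num)
  have : 0 ≤ |t - m| / r := div_nonneg (abs_nonneg _) hr.le
  linarith

lemma hat_self (m r : ℝ) (hr : 0 < r) : hat m r m = 1 := by
  unfold hat
  simp [hr.ne']

lemma hat_eq_zero (m r t : ℝ) (hr : 0 < r) (h : r ≤ |t - m|) : hat m r t = 0 := by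
  unfold hat
  rw [max_eq_left]
  have : 1 ≤ |t - m| / r := (one_le_div hr).mpr h
  linarith

lemma abs_lt_of_hat_ne_zero {m r t : ℝ} (hr : 0 < r) (h : hat m r t ≠ 0) : |t - m| < r := by
  by_contra hc
  exact h (hat_eq_zero m r t hr (not_lt.mp hc))

lemma hat_mul_hat {m₁ r₁ m₂ r₂ : ℝ} (hr₁ : 0 < r₁) (hr₂ : 0 < r₂)
    (h : r₁ + r₂ ≤ |m₁ - m₂|) (t : ℝ) : hat m₁ r₁ t * hat m₂ r₂ t = 0 := by
  by_contra hc
  have h1 : |t - m₁| < r₁ := abs_lt_of_hat_ne_zero hr₁ (left_ne_zero_of_mul hc)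
  have h2 : |t - m₂| < r₂ := abs_lt_of_hat_ne_zero hr₂ (right_ne_zero_of_mul hc)
  have : |m₁ - m₂| ≤ |t - m₁| + |t - m₂| := by
    calc |m₁ - m₂| = |(m₁ - t) + (t - m₂)| := by ring_nf
    _ ≤ |m₁ - t| + |t - m₂| := abs_add_le _ _
    _ = |t - m₁| + |t - m₂| := by rw [abs_sub_comm]
  linarith

variable {W : Type*} [NormedAddCommGroup W] [InnerProductSpace ℂ W] [CompleteSpace W]

/-- For a compact selfadjoint operator, every interval `(0, η)` contains a point
outside the (real) spectrum. -/
lemma exists_gap (a : W →L[ℂ] W) (hcpt : IsCompactOperator ⇑a) (hsa : IsSelfAdjoint a)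
    {η : ℝ} (hη : 0 < η) : ∃ δ : ℝ, 0 < δ ∧ δ < η ∧ δ ∉ spectrum ℝ a := by
  by_contra hcon
  push_neg at hcon
  have hspec : ∀ δ : ℝ, 0 < δ → δ < η → δ ∈ spectrum ℝ a := hcon
  -- the algebra is nontrivial (otherwise spectrum is empty)
  rcases subsingleton_or_nontrivial W with hW | hW
  · have : IsUnit ((algebraMap ℝ (W →L[ℂ] W)) (η/2) - a) := by
      have : Subsingleton (W →L[ℂ] W) := by
        constructor; intro x y; ext w; exact Subsingleton.elim _ _
      exact isUnit_of_subsingleton _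
    exact (hspec (η/2) (by linarith) (by linarith)) this
  -- setup
  set c : ℝ := η / 2 with hc
  have hc0 : 0 < c := by positivity
  set m : ℕ → ℝ := fun k => c + c * (1/2)^(k+1) with hm
  set r : ℕ → ℝ := fun k => c * (1/2)^(k+3) with hr
  have hrpos : ∀ k, 0 < r k := fun k => by positivity
  have hmmem : ∀ k, m k ∈ spectrum ℝ a := by
    intro k
    have hm1 : m k = c + c * (1/2)^(k+1) := rfl
    have X : (0:ℝ) < c * (1/2)^(k+1) := by positivity
    have h1 : ((1:ℝ)/2)^(k+1) ≤ 1/2 :=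
      pow_le_of_le_one (by norm_num) (by norm_num) (by omega)
    have h2 : c * ((1:ℝ)/2)^(k+1) ≤ c * (1/2) := mul_le_mul_of_nonneg_left h1 hc0.le
    refine hspec _ (by rw [hm1]; linarith) (by rw [hm1, hc] at *; linarith)
  have hgap : ∀ k l : ℕ, k ≠ l → r k + r l ≤ |m k - m l| := by
    have key : ∀ k l : ℕ, k < l → r k + r l ≤ m k - m l := by
      intro k l hkl
      have hml : (1/2:ℝ)^(l+1) ≤ (1/2)^(k+2) :=
        pow_le_pow_of_le_one (by norm_num) (by norm_num) (by omega)
      have hrl : (1/2:ℝ)^(l+3) ≤ (1/2)^(k+4) :=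
        pow_le_pow_of_le_one (by norm_num) (by norm_num) (by omega)
      have Hml : c * (1/2:ℝ)^(l+1) ≤ c * (1/2)^(k+2) := mul_le_mul_of_nonneg_left hml hc0.le
      have Hrl : c * (1/2:ℝ)^(l+3) ≤ c * (1/2)^(k+4) := mul_le_mul_of_nonneg_left hrl hc0.le
      have E1 : c * (1/2:ℝ)^(k+1) = 8*(c * (1/2)^(k+4)) := by ring
      have E2 : c * (1/2:ℝ)^(k+2) = 4*(c * (1/2)^(k+4)) := by ring
      have E3 : c * (1/2:ℝ)^(k+3) = 2*(c * (1/2)^(k+4)) := by ring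
      have X : (0:ℝ) < c * (1/2)^(k+4) := by positivity
      have hr1 : r k = c * (1/2)^(k+3) := rfl
      have hr2 : r l = c * (1/2)^(l+3) := rfl
      have hm1 : m k = c + c * (1/2)^(k+1) := rfl
      have hm2 : m l = c + c * (1/2)^(l+1) := rfl
      rw [hr1, hr2, hm1, hm2]
      linarith
    intro k l hkl
    rcases lt_or_gt_of_ne hkl with h | h
    · have hk := key k l h
      rw [abs_of_nonneg (le_trans (by positivity) hk)]
      exact hk
    · have hk := key l k h
      rw [abs_sub_comm, abs_of_nonneg (le_trans (by positivity) hk), add_comm]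
      exact hk
  -- bump operators
  set f : ℕ → ℝ → ℝ := fun k => hat (m k) (r k) with hf
  have hfc : ∀ k, ContinuousOn (f k) (spectrum ℝ a) := fun k =>
    (hat_continuous _ _).continuousOn
  set b : ℕ → W →L[ℂ] W := fun k => cfc (f k) a with hb
  have hbsa : ∀ k, IsSelfAdjoint (b k) := fun k => cfc_predicate (f k) a
  -- 1 ≤ ‖b k‖
  have hbnorm : ∀ k, 1 ≤ ‖b k‖ := by
    intro k
    have h1 : (1:ℝ) ∈ spectrum ℝ (b k) := by
      rw [hb]
      rw [cfc_map_spectrum (f k) a]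
      exact ⟨m k, hmmem k, hat_self _ _ (hrpos k)⟩
    simpa using spectrum.norm_le_norm_of_mem h1
  -- choose approximate maximizers
  have hx : ∀ k, ∃ x : W, ‖x‖ < 1 ∧ (1:ℝ)/2 < ‖b k x‖ := by
    intro k
    have : (1:ℝ)/2 < ‖b k‖ := by linarith [hbnorm k]
    obtain ⟨x, hx1, hx2⟩ := (b k).exists_lt_apply_of_lt_opNorm this
    exact ⟨x, hx1, by simpa using hx2⟩
  choose x hx1 hx2 using hx
  -- the auxiliary functions g k with t * g k t = f k t
  set g : ℕ → ℝ → ℝ := fun k t => f k t * (max t c)⁻¹ with hg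
  have hgc : ∀ k, ContinuousOn (g k) (spectrum ℝ a) := by
    intro k
    apply Continuous.continuousOn
    apply ((hat_continuous _ _).mul (Continuous.inv₀ (continuous_id.max continuous_const) ?_))
    intro t
    exact ne_of_gt (lt_of_lt_of_le hc0 (le_max_right _ _))
  have hfsupp : ∀ k t, t ≤ c → f k t = 0 := by
    intro k t ht
    apply hat_eq_zero _ _ _ (hrpos k)
    have hm1 : m k = c + c * (1/2)^(k+1) := rfl
    have hr1 : r k = c * (1/2)^(k+3) := rfl
    have E1 : c * (1/2:ℝ)^(k+1) = 4*(c * (1/2)^(k+3)) := by ring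
    have X : (0:ℝ) < c * (1/2)^(k+3) := by positivity
    rw [abs_sub_comm, abs_of_nonneg (by rw [hm1]; linarith), hm1, hr1]
    linarith
  have hmul : ∀ k, (fun t => t * g k t) = f k := by
    intro k
    funext t
    rcases le_or_gt t c with ht | ht
    · simp [hg, hfsupp k t ht]
    · have hmax : max t c = t := max_eq_left ht.le
      have ht0 : t ≠ 0 := ne_of_gt (lt_trans hc0 ht)
      rw [hg]
      simp only [hmax]
      rw [mul_comm t _, mul_assoc, inv_mul_cancel₀ ht0, mul_one]
  have hab : ∀ k, a * cfc (g k) a = b k := by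
    intro k
    have h1 := cfc_mul (id : ℝ → ℝ) (g k) a (continuous_id.continuousOn) (hgc k)
    rw [cfc_id ℝ a hsa] at h1
    have h2 : (fun t => (id : ℝ → ℝ) t * g k t) = f k := hmul k
    rw [h2] at h1
    exact h1.symm
  -- bound on ‖cfc (g k) a‖
  have hgbound : ∀ k, ‖cfc (g k) a‖ ≤ c⁻¹ := by
    intro k
    apply norm_cfc_le (by positivity)
    intro t ht
    rw [hg]
    rw [Real.norm_eq_abs, abs_mul, abs_inv]
    have h1 : |f k t| ≤ 1 := by
      rw [abs_of_nonneg (hat_nonneg _ _ _)]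
      exact hat_le_one _ _ _ (hrpos k)
    have h2 : c ≤ |max t c| := by
      rw [abs_of_pos (lt_of_lt_of_le hc0 (le_max_right _ _))]
      exact le_max_right _ _
    have h3 : |max t c|⁻¹ ≤ c⁻¹ := by
      apply inv_anti₀ hc0 h2
    calc |f k t| * |max t c|⁻¹ ≤ 1 * c⁻¹ :=
      mul_le_mul h1 h3 (by positivity) (by norm_num)
    _ = c⁻¹ := one_mul _
  set y : ℕ → W := fun k => cfc (g k) a (x k) with hy
  have hyb : ∀ k, ‖y k‖ < c⁻¹ + 1 := by
    intro k
    calc ‖y k‖ ≤ ‖cfc (g k) a‖ * ‖x k‖ := (cfc (g k) a).le_opNorm _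
    _ ≤ c⁻¹ * 1 := by
        apply mul_le_mul (hgbound k) (hx1 k).le (norm_nonneg _) (by positivity)
    _ < c⁻¹ + 1 := by linarith
  have hay : ∀ k, a (y k) = b k (x k) := by
    intro k
    rw [hy, ← ContinuousLinearMap.mul_apply, hab]
  -- orthogonality of the b k images
  have horth : ∀ k l : ℕ, k ≠ l → ∀ u v : W, ⟪b k u, b l v⟫_ℂ = 0 := by
    intro k l hkl u v
    have hbb : b k * b l = 0 := by
      rw [hb, ← cfc_mul _ _ a (hfc k) (hfc l)]
      have : (fun t => f k t * f l t) = fun _ => (0:ℝ) := by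
        funext t
        exact hat_mul_hat (hrpos k) (hrpos l) (hgap k l hkl) t
      rw [this]
      simp
    have hz : b k (b l v) = 0 := by
      rw [← ContinuousLinearMap.mul_apply, hbb]; simp
    calc ⟪b k u, b l v⟫_ℂ = ⟪u, b k (b l v)⟫_ℂ := (hbsa k).isSymmetric u (b l v)
    _ = 0 := by rw [hz, inner_zero_right]
  -- separation
  have hsep : ∀ k l : ℕ, k ≠ l → (0.7:ℝ) ≤ ‖a (y k) - a (y l)‖ := by
    intro k l hkl
    rw [hay k, hay l]
    have horth' : ⟪b k (x k), b l (x l)⟫_ℂ = 0 := horth k l hkl _ _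
    have hsq : ‖b k (x k) - b l (x l)‖^2 = ‖b k (x k)‖^2 + ‖b l (x l)‖^2 := by
      rw [@norm_sub_sq ℂ]
      rw [horth']
      simp
    have h1 : (1:ℝ)/2 < ‖b k (x k)‖ := hx2 k
    have h2 : (1:ℝ)/2 < ‖b l (x l)‖ := hx2 l
    nlinarith [norm_nonneg (b k (x k) - b l (x l)), norm_nonneg (b k (x k)), norm_nonneg (b l (x l))]
  -- contradiction with compactness
  obtain ⟨K, hK, hKsub⟩ := hcpt.image_ball_subset_compact (𝕜₁ := ℂ) (c⁻¹ + 1)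
  have hmem : ∀ k, a (y k) ∈ K := by
    intro k
    apply hKsub
    exact ⟨y k, by simpa [Metric.mem_ball] using hyb k, rfl⟩
  obtain ⟨z, _, φ, hφ, hconv⟩ := hK.tendsto_subseq hmem
  have hcauchy := hconv.cauchySeq
  rw [Metric.cauchySeq_iff] at hcauchy
  obtain ⟨N, hN⟩ := hcauchy 0.7 (by norm_num)
  have h1 := hN (N+1) (by omega) N (le_refl N)
  have hne : φ (N+1) ≠ φ N := by
    intro h
    exact absurd (hφ.injective h) (by omega)
  have h2 := hsep (φ (N+1)) (φ N) hne
  simp only [Function.comp_apply] at h1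
  rw [dist_eq_norm] at h1
  linarith

end QRGap

namespace QRTrunc

open QRGap

lemma ite_contOn {δ : ℝ} {u w : ℝ → ℝ} (hu : ContinuousOn u (Set.Iio δ))
    (hw : ContinuousOn w (Set.Ioi δ)) :
    ContinuousOn (fun t => if t ≤ δ then u t else w t) ({δ}ᶜ : Set ℝ) := by
  intro t ht
  have htne : t ≠ δ := ht
  rcases lt_or_gt_of_ne htne with h | h
  · have hA : ContinuousAt u t := hu.continuousAt (Iio_mem_nhds h)
    have heq : (fun s => if s ≤ δ then u s else w s) =ᶠ[nhds t] u := by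
      filter_upwards [Iio_mem_nhds h] with s hs
      rw [if_pos (le_of_lt (Set.mem_Iio.mp hs))]
    exact (hA.congr heq.symm).continuousWithinAt
  · have hA : ContinuousAt w t := hw.continuousAt (Ioi_mem_nhds h)
    have heq : (fun s => if s ≤ δ then u s else w s) =ᶠ[nhds t] w := by
      filter_upwards [Ioi_mem_nhds h] with s hs
      rw [if_neg (not_le.mpr (Set.mem_Ioi.mp hs))]
    exact (hA.congr heq.symm).continuousWithinAt

variable {W : Type*} [NormedAddCommGroup W] [InnerProductSpace ℂ W] [CompleteSpace W]
variable {M : Type*} [NormedAddCommGroup M]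

/-- Spectral truncation: an approximate normalization of a single vector. -/
lemma truncate (H : HilbertCStarModule (W →L[ℂ] W) M) (v : M)
    (hcpt : IsCompactOperator ⇑(H.inner v v)) {η : ℝ} (hη : 0 < η) :
    ∃ T S : W →L[ℂ] W,
      (H.smul v T = 0 ∨
        (H.inner (H.smul v T) (H.smul v T) ≠ 0 ∧
         H.inner (H.smul v T) (H.smul v T) * H.inner (H.smul v T) (H.smul v T)
           = H.inner (H.smul v T) (H.smul v T))) ∧
      ‖v - H.smul (H.smul v T) S‖ ≤ η := by
  set a := H.inner v v with ha
  have ha0 : 0 ≤ a := H.inner_self_nonneg v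
  have hsa : IsSelfAdjoint a := .of_nonneg ha0
  by_cases haz : a = 0
  · have hv : v = 0 := H.inner_self_eq_zero v haz
    refine ⟨0, 0, Or.inl (H.smul_zero' v), ?_⟩
    rw [H.smul_zero', hv, sub_zero, norm_zero]
    exact hη.le
  · have hnt : Nontrivial (W →L[ℂ] W) := nontrivial_of_ne a 0 haz
    have hna : 0 < ‖a‖ := norm_pos_iff.mpr haz
    have hmin : 0 < min (η^2) ‖a‖ := lt_min (by positivity) hna
    obtain ⟨δ, hδ1, hδ2, hδ3⟩ := exists_gap a hcpt hsa hmin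
    have hδη : δ < η^2 := lt_of_lt_of_le hδ2 (min_le_left _ _)
    have hδa : δ < ‖a‖ := lt_of_lt_of_le hδ2 (min_le_right _ _)
    have hsub : spectrum ℝ a ⊆ ({δ}ᶜ : Set ℝ) := by
      intro t htσ hted
      exact hδ3 ((Set.mem_singleton_iff.mp hted) ▸ htσ)
    set χ : ℝ → ℝ := fun t => if t ≤ δ then 0 else 1 with hχdef
    set g : ℝ → ℝ := fun t => if t ≤ δ then 0 else Real.sqrt t⁻¹ with hgdef
    set sf : ℝ → ℝ := fun t => if t ≤ δ then 0 else Real.sqrt t with hsfdef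
    have hχ : ContinuousOn χ (spectrum ℝ a) :=
      (ite_contOn continuous_const.continuousOn continuous_const.continuousOn).mono hsub
    have hg : ContinuousOn g (spectrum ℝ a) := by
      refine (ite_contOn continuous_const.continuousOn ?_).mono hsub
      intro t ht
      have ht0 : t ≠ 0 := ne_of_gt (lt_trans hδ1 ht)
      exact (Real.continuous_sqrt.continuousAt.comp (continuousAt_inv₀ ht0)).continuousWithinAt
    have hs : ContinuousOn sf (spectrum ℝ a) :=
      (ite_contOn continuous_const.continuousOn
        Real.continuous_sqrt.continuousOn).mono hsub
    set T := cfc g a with hT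
    set S := cfc sf a with hS
    set p := cfc χ a with hp
    set q := H.smul v T with hq
    have hTsa : star T = T := (cfc_predicate g a).star_eq
    -- inner q q = p
    have h1 : cfc (fun t : ℝ => g t * t) a = T * a := by
      have h := cfc_mul g (fun t : ℝ => t) a hg continuous_id.continuousOn
      rw [cfc_id' ℝ a hsa] at h
      exact h
    have h2 : cfc (fun t : ℝ => g t * t * g t) a = T * a * T := by
      rw [← h1]
      exact cfc_mul (fun t => g t * t) g a (hg.mul continuous_id.continuousOn) hg
    have hqq : H.inner q q = p := by
      rw [hq, H.inner_smul_right, H.inner_smul_left, hTsa, ← ha, ← h2, hp]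
      apply cfc_congr
      intro t _
      rcases le_or_gt t δ with h | h
      · simp [hgdef, hχdef, h]
      · have ht0 : (0:ℝ) < t := lt_trans hδ1 h
        simp only [hgdef, hχdef, if_neg (not_le.mpr h)]
        rw [mul_comm (Real.sqrt t⁻¹) t, mul_assoc,
          Real.mul_self_sqrt (by positivity : (0:ℝ) ≤ t⁻¹)]
        exact mul_inv_cancel₀ (ne_of_gt ht0)
    have hpp : p * p = p := by
      have h := cfc_mul χ χ a hχ hχ
      rw [hp, ← h]
      apply cfc_congr
      intro t _
      rcases le_or_gt t δ with h' | h' <;> simp [hχdef, h', not_le.mpr]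
    -- T * S = p
    have hTS : T * S = p := by
      have h := cfc_mul g sf a hg hs
      rw [hT, hS, hp, ← h]
      apply cfc_congr
      intro t _
      rcases le_or_gt t δ with h' | h'
      · simp [hgdef, hsfdef, hχdef, h']
      · have ht0 : (0:ℝ) < t := lt_trans hδ1 h'
        simp only [hgdef, hsfdef, hχdef, if_neg (not_le.mpr h')]
        rw [Real.sqrt_inv]
        exact inv_mul_cancel₀ (ne_of_gt (Real.sqrt_pos.mpr ht0))
    -- the residual
    have hres : v - H.smul q S = v - H.smul v p := by
      rw [hq, ← H.smul_mul, hTS]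
    -- m := t * χ t
    have hap : cfc (fun t : ℝ => t * χ t) a = a * p := by
      have h := cfc_mul (fun t : ℝ => t) χ a continuous_id.continuousOn hχ
      rw [cfc_id' ℝ a hsa] at h
      exact h
    have hpa : p * a = cfc (fun t : ℝ => t * χ t) a := by
      have h := cfc_mul χ (fun t : ℝ => t) a hχ continuous_id.continuousOn
      rw [cfc_id' ℝ a hsa] at h
      rw [hp, ← h]
      apply cfc_congr
      intro t _
      ring
    have hmp : cfc (fun t : ℝ => t * χ t) a * p = cfc (fun t : ℝ => t * χ t) a := by
      have h := cfc_mul (fun t : ℝ => t * χ t) χ a (continuous_id.continuousOn.mul hχ) hχ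
      rw [hp, ← h]
      apply cfc_congr
      intro t _
      rcases le_or_gt t δ with h' | h' <;> simp [hχdef, h', not_le.mpr]
    have hpsa : star p = p := (cfc_predicate χ a).star_eq
    have hsub2 : cfc (fun t : ℝ => t - t * χ t) a = a - cfc (fun t : ℝ => t * χ t) a := by
      have h := cfc_sub (fun t : ℝ => t) (fun t : ℝ => t * χ t) a
        continuous_id.continuousOn (continuous_id.continuousOn.mul hχ)
      rw [cfc_id' ℝ a hsa] at h
      exact h
    have hz : H.inner (v - H.smul v p) (v - H.smul v p) =
        cfc (fun t => if t ≤ δ then t else 0) a := by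
      have hx1 : H.inner (H.smul v p) (H.smul v p) = cfc (fun t : ℝ => t * χ t) a := by
        rw [H.inner_smul_right, H.inner_smul_left, hpsa, ← ha, hpa, hmp]
      rw [H.inner_sub_right, H.inner_sub_left, H.inner_sub_left, hx1,
        H.inner_smul_right, H.inner_smul_left, hpsa, ← ha]
      rw [hpa, ← hap]
      have hsimp : a - cfc (fun t : ℝ => t * χ t) a -
          (cfc (fun t : ℝ => t * χ t) a - cfc (fun t : ℝ => t * χ t) a)
          = a - cfc (fun t : ℝ => t * χ t) a := by
        rw [sub_self, sub_zero]
      rw [hsimp, ← hsub2]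
      apply cfc_congr
      intro t _
      rcases le_or_gt t δ with h' | h' <;> simp [hχdef, h', not_le.mpr]
    have hnorm : ‖cfc (fun t => if t ≤ δ then t else 0) a‖ ≤ δ := by
      apply norm_cfc_le hδ1.le
      intro t ht
      have ht0 : 0 ≤ t := spectrum_nonneg_of_nonneg ha0 ht
      rcases le_or_gt t δ with h | h
      · rw [if_pos h, Real.norm_eq_abs, abs_of_nonneg ht0]; exact h
      · rw [if_neg (not_le.mpr h)]; simpa using hδ1.le
    -- p ≠ 0
    have hpne : p ≠ 0 := by
      intro hp0
      have h1 : (1:ℝ) ∈ spectrum ℝ p := by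
        rw [hp, cfc_map_spectrum χ a]
        refine ⟨‖a‖, CStarAlgebra.norm_mem_spectrum_of_nonneg ha0, ?_⟩
        simp [hχdef, not_le.mpr hδa]
      rw [hp0, spectrum.zero_eq] at h1
      exact one_ne_zero (Set.mem_singleton_iff.mp h1)
    refine ⟨T, S, Or.inr ⟨?_, ?_⟩, ?_⟩
    · rw [← hq, hqq]; exact hpne
    · rw [← hq, hqq]; exact hpp
    · rw [← hq, hres, H.norm_eq, hz]
      calc Real.sqrt ‖cfc (fun t => if t ≤ δ then t else 0) a‖
          ≤ Real.sqrt δ := Real.sqrt_le_sqrt hnorm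
      _ ≤ Real.sqrt (η^2) := Real.sqrt_le_sqrt hδη.le
      _ = η := Real.sqrt_sq hη.le

end QRTrunc

namespace QRMain

open QRTrunc

variable {W : Type*} [NormedAddCommGroup W] [InnerProductSpace ℂ W] [CompleteSpace W]
variable {M : Type*} [NormedAddCommGroup M]

lemma sum_compact {n : ℕ} (s : Finset (Fin n)) (F : Fin n → (W →L[ℂ] W))
    (hF : ∀ j, IsCompactOperator ⇑(F j)) :
    IsCompactOperator ⇑(∑ j ∈ s, F j) := by
  classical
  induction s using Finset.induction_on with
  | empty => simpa using isCompactOperator_zero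
  | @insert a s ha ih =>
    rw [Finset.sum_insert ha]
    have : ⇑(F a + ∑ j ∈ s, F j) = ⇑(F a) + ⇑(∑ j ∈ s, F j) := by
      ext x; simp
    rw [this]
    exact (hF a).add ih

lemma mul_compact {x y z : W →L[ℂ] W} (hy : IsCompactOperator ⇑y) :
    IsCompactOperator ⇑(x * y * z) := by
  have h1 : ⇑(x * y * z) = ⇑x ∘ ⇑y ∘ ⇑z := by
    ext u; simp [ContinuousLinearMap.mul_apply]
  rw [h1]
  exact (hy.comp_clm z).clm_comp x

lemma inner_combo_compact (H : HilbertCStarModule (W →L[ℂ] W) M) {n : ℕ}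
    (w : Fin n → M)
    (hcpt : ∀ i j, IsCompactOperator ⇑(H.inner (w i) (w j)))
    (c d : Fin n → (W →L[ℂ] W)) :
    IsCompactOperator
      ⇑(H.inner (∑ j, H.smul (w j) (c j)) (∑ j, H.smul (w j) (d j))) := by
  have hexp : H.inner (∑ j, H.smul (w j) (c j)) (∑ j, H.smul (w j) (d j))
      = ∑ j, ∑ k, star (c j) * H.inner (w j) (w k) * d k := by
    rw [H.inner_sum_left]
    apply Finset.sum_congr rfl
    intro j _
    rw [H.inner_sum_right]
    apply Finset.sum_congr rfl
    intro k _
    rw [H.inner_smul_right, H.inner_smul_left, mul_assoc]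
  rw [hexp]
  apply sum_compact
  intro j
  apply sum_compact
  intro k
  exact mul_compact (hcpt j k)

theorem key (H : HilbertCStarModule (W →L[ℂ] W) M) (n : ℕ) :
    ∀ (w : Fin n → M),
      (∀ i j : Fin n, IsCompactOperator ⇑(H.inner (w i) (w j))) →
      ∀ ε : ℝ, 0 < ε →
    ∃ (q : Fin n → M) (R Rinv : Matrix (Fin n) (Fin n) (W →L[ℂ] W)),
      (∀ j : Fin n, q j = 0 ∨
        (H.inner (q j) (q j) ≠ 0 ∧
          H.inner (q j) (q j) * H.inner (q j) (q j) = H.inner (q j) (q j))) ∧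
      (∀ i j : Fin n, i ≠ j → H.inner (q i) (q j) = 0) ∧
      (∀ i j : Fin n, j < i → R i j = 0) ∧
      (∀ j : Fin n, q j = ∑ i, H.smul (w i) (Rinv i j)) ∧
      (∀ j : Fin n, ‖w j - ∑ i, H.smul (q i) (R i j)‖ ≤ ε) := by
  induction n with
  | zero =>
    intro w _ ε _
    exact ⟨fun j => j.elim0, fun i => i.elim0, fun i => i.elim0,
      fun j => j.elim0, fun i => i.elim0, fun i => i.elim0,
      fun j => j.elim0, fun j => j.elim0⟩
  | succ n ih =>
    intro w hw ε hε
    obtain ⟨q', R', Rinv', hnorm', horth', htri', hrep', herr'⟩ :=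
      ih (fun i => w i.castSucc) (fun i j => hw _ _) ε hε
    set β : Fin n → (W →L[ℂ] W) := fun i => H.inner (q' i) (w (Fin.last n)) with hβ
    set v : M := w (Fin.last n) - ∑ i, H.smul (q' i) (β i) with hv
    set cc : Fin (n+1) → (W →L[ℂ] W) :=
      fun j => Fin.lastCases 1 (fun j' => -∑ i, Rinv' j' i * β i) j with hcc
    have hcclast : cc (Fin.last n) = 1 := by
      simp only [hcc]; rw [Fin.lastCases_last]
    have hcccast : ∀ j' : Fin n, cc (Fin.castSucc j') = -∑ i, Rinv' j' i * β i := by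
      intro j'; simp only [hcc]; rw [Fin.lastCases_castSucc]
    have hvrep : v = ∑ j, H.smul (w j) (cc j) := by
      rw [Fin.sum_univ_castSucc, hcclast, H.smul_one]
      have hterm : ∀ j' : Fin n, H.smul (w (Fin.castSucc j')) (cc (Fin.castSucc j'))
          = -∑ i, H.smul (H.smul (w (Fin.castSucc j')) (Rinv' j' i)) (β i) := by
        intro j'
        rw [hcccast, H.smul_neg', H.smul_sum']
        congr 1
        apply Finset.sum_congr rfl
        intro i _
        rw [H.smul_mul]
      have hsum : ∑ j' : Fin n, H.smul (w (Fin.castSucc j')) (cc (Fin.castSucc j'))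
          = -∑ i, H.smul (q' i) (β i) := by
        rw [Finset.sum_congr rfl (fun j' _ => hterm j')]
        calc ∑ j' : Fin n, -∑ i, H.smul (H.smul (w (Fin.castSucc j')) (Rinv' j' i)) (β i)
            = -∑ j' : Fin n, ∑ i, H.smul (H.smul (w (Fin.castSucc j')) (Rinv' j' i)) (β i) :=
              Finset.sum_neg_distrib _
        _ = -∑ i, ∑ j' : Fin n, H.smul (H.smul (w (Fin.castSucc j')) (Rinv' j' i)) (β i) := by
              rw [Finset.sum_comm]
        _ = -∑ i, H.smul (q' i) (β i) := by
              congr 1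
              apply Finset.sum_congr rfl
              intro i _
              rw [← H.sum_smul', ← hrep' i]
      rw [hsum, hv]
      abel
    have hvcpt : IsCompactOperator ⇑(H.inner v v) := by
      rw [hvrep]
      exact inner_combo_compact H w hw cc cc
    -- orthogonality of v against the old q'
    have hqv : ∀ i : Fin n, H.inner (q' i) v = 0 := by
      intro i
      rw [hv, H.inner_sub_right, H.inner_sum_right]
      rw [Finset.sum_eq_single i
        (fun k _ hk => by rw [H.inner_smul_right, horth' i k (Ne.symm hk), zero_mul])
        (fun h => absurd (Finset.mem_univ i) h)]
      rw [H.inner_smul_right]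
      rcases hnorm' i with h0 | ⟨_, hidem⟩
      · rw [hβ]; simp only [h0, H.inner_zero_left, zero_mul, sub_zero]
      · have hqp : H.smul (q' i) (H.inner (q' i) (q' i)) = q' i :=
          H.smul_inner_self_of_idem (q' i) hidem
        have hβi : β i = H.inner (q' i) (w (Fin.last n)) := rfl
        have hkey : H.inner (q' i) (q' i) * β i = β i := by
          calc H.inner (q' i) (q' i) * β i
              = star (H.inner (q' i) (q' i)) * H.inner (q' i) (w (Fin.last n)) := by
                rw [H.star_inner, hβi]
          _ = H.inner (H.smul (q' i) (H.inner (q' i) (q' i))) (w (Fin.last n)) :=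
                (H.inner_smul_left _ _ _).symm
          _ = H.inner (q' i) (w (Fin.last n)) := by rw [hqp]
          _ = β i := hβi.symm
        rw [hkey, sub_self]
    obtain ⟨T, S, hqn, herrn⟩ := truncate H v hvcpt hε
    set qn : M := H.smul v T with hqndef
    have hqnorth : ∀ i : Fin n, H.inner (q' i) qn = 0 := by
      intro i
      rw [hqndef, H.inner_smul_right, hqv i, zero_mul]
    refine ⟨Fin.snoc q' qn,
      Matrix.of (fun i j => Fin.lastCases
        (Fin.lastCases S (fun _ => (0 : W →L[ℂ] W)) j)
        (fun i' => Fin.lastCases (β i') (fun j' => R' i' j') j) i),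
      Matrix.of (fun i j => Fin.lastCases (cc i * T)
        (fun j' => Fin.lastCases 0 (fun i' => Rinv' i' j') i) j),
      ?_, ?_, ?_, ?_, ?_⟩
    · -- normalized or zero
      intro j
      induction j using Fin.lastCases with
      | last => rw [Fin.snoc_last]; exact hqn
      | cast j' => rw [Fin.snoc_castSucc]; exact hnorm' j'
    · -- orthogonality
      intro i j hij
      induction i using Fin.lastCases with
      | last =>
        induction j using Fin.lastCases with
        | last => exact absurd rfl hij
        | cast j' =>
          rw [Fin.snoc_last, Fin.snoc_castSucc, ← H.star_inner, hqnorth j', star_zero]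
      | cast i' =>
        induction j using Fin.lastCases with
        | last => rw [Fin.snoc_last, Fin.snoc_castSucc]; exact hqnorth i'
        | cast j' =>
          rw [Fin.snoc_castSucc, Fin.snoc_castSucc]
          exact horth' i' j' (fun h => hij (congrArg Fin.castSucc h))
    · -- triangular
      intro i j hji
      induction i using Fin.lastCases with
      | last =>
        induction j using Fin.lastCases with
        | last => exact absurd hji (lt_irrefl _)
        | cast j' =>
          simp only [Matrix.of_apply]
          rw [Fin.lastCases_last, Fin.lastCases_castSucc]
      | cast i' =>
        induction j using Fin.lastCases with
        | last => exact absurd hji (not_lt.mpr (Fin.castSucc_lt_last i').le)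
        | cast j' =>
          simp only [Matrix.of_apply]
          rw [Fin.lastCases_castSucc, Fin.lastCases_castSucc]
          exact htri' i' j' (Fin.castSucc_lt_castSucc_iff.mp hji)
    · -- representation
      intro j
      induction j using Fin.lastCases with
      | last =>
        rw [Fin.snoc_last, hqndef, hvrep, H.sum_smul']
        apply Finset.sum_congr rfl
        intro i _
        rw [← H.smul_mul]
        congr 1
        simp only [Matrix.of_apply]
        rw [Fin.lastCases_last]
      | cast j' =>
        rw [Fin.snoc_castSucc, Fin.sum_univ_castSucc]
        have hlastterm : H.smul (w (Fin.last n))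
            (Matrix.of (fun i j => Fin.lastCases (cc i * T)
              (fun j'' => Fin.lastCases 0 (fun i' => Rinv' i' j'') i) j)
              (Fin.last n) (Fin.castSucc j')) = 0 := by
          simp only [Matrix.of_apply]
          rw [Fin.lastCases_castSucc, Fin.lastCases_last, H.smul_zero']
        rw [hlastterm, add_zero, hrep' j']
        apply Finset.sum_congr rfl
        intro i _
        congr 1
        simp only [Matrix.of_apply]
        rw [Fin.lastCases_castSucc, Fin.lastCases_castSucc]
    · -- error bound
      intro j
      induction j using Fin.lastCases with
      | last =>
        have hsum : ∑ i : Fin (n+1), H.smul ((Fin.snoc q' qn : Fin (n+1) → M) i)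
            (Matrix.of (fun i j => Fin.lastCases
              (Fin.lastCases S (fun _ => (0 : W →L[ℂ] W)) j)
              (fun i' => Fin.lastCases (β i') (fun j'' => R' i' j'') j) i) i (Fin.last n))
            = (∑ i : Fin n, H.smul (q' i) (β i)) + H.smul qn S := by
          rw [Fin.sum_univ_castSucc]
          congr 1
          · apply Finset.sum_congr rfl
            intro i _
            rw [Fin.snoc_castSucc]
            congr 1
            simp only [Matrix.of_apply]
            rw [Fin.lastCases_castSucc, Fin.lastCases_last]
          · rw [Fin.snoc_last]
            congr 1
            simp only [Matrix.of_apply]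
            rw [Fin.lastCases_last, Fin.lastCases_last]
        rw [hsum]
        have : w (Fin.last n) - ((∑ i : Fin n, H.smul (q' i) (β i)) + H.smul qn S)
            = v - H.smul qn S := by
          rw [hv]; abel
        rw [this]
        exact herrn
      | cast j' =>
        have hsum : ∑ i : Fin (n+1), H.smul ((Fin.snoc q' qn : Fin (n+1) → M) i)
            (Matrix.of (fun i j => Fin.lastCases
              (Fin.lastCases S (fun _ => (0 : W →L[ℂ] W)) j)
              (fun i' => Fin.lastCases (β i') (fun j'' => R' i' j'') j) i) i (Fin.castSucc j'))
            = ∑ i : Fin n, H.smul (q' i) (R' i j') := by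
          rw [Fin.sum_univ_castSucc]
          have hz : (Matrix.of (fun i j => Fin.lastCases
              (Fin.lastCases S (fun _ => (0 : W →L[ℂ] W)) j)
              (fun i' => Fin.lastCases (β i') (fun j'' => R' i' j'') j) i) :
                Matrix (Fin (n+1)) (Fin (n+1)) (W →L[ℂ] W))
              (Fin.last n) (Fin.castSucc j') = 0 := by
            simp only [Matrix.of_apply]
            rw [Fin.lastCases_last, Fin.lastCases_castSucc]
          rw [Fin.snoc_last, hz, H.smul_zero', add_zero]
          apply Finset.sum_congr rfl
          intro i _
          rw [Fin.snoc_castSucc]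
          congr 1
          simp only [Matrix.of_apply]
          rw [Fin.lastCases_castSucc, Fin.lastCases_castSucc]
        rw [hsum]
        exact herr' j'

end QRMain


/-- **Approximate QR decomposition in Hilbert C*-modules over `B(W)`.** Given `w 1, …, w n`
with all `⟨w i, w j⟩` compact and `ε > 0`, there are `q 1, …, q n`, each zero or normalized
and mutually orthogonal, an upper triangular matrix `R` and a matrix `R_inv` over `B(W)`,
such that `q j = ∑ i, w i • (R_inv i j)` and `‖w j − ∑ i, q i • (R i j)‖ ≤ ε` for all `j`. -/
theorem qr_decomposition_in_module_over_BW
    {W : Type*} [NormedAddCommGroup W] [InnerProductSpace ℂ W] [CompleteSpace W]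
    {M : Type*} [NormedAddCommGroup M] [CompleteSpace M]
    (H : HilbertCStarModule (W →L[ℂ] W) M)
    (n : ℕ) (w : Fin n → M)
    (h_compact : ∀ i j : Fin n, IsCompactOperator ⇑(H.inner (w i) (w j)))
    (ε : ℝ) (hε : 0 < ε) :
    ∃ (q : Fin n → M) (R Rinv : Matrix (Fin n) (Fin n) (W →L[ℂ] W)),
      (∀ j : Fin n, q j = 0 ∨
        (H.inner (q j) (q j) ≠ 0 ∧
          H.inner (q j) (q j) * H.inner (q j) (q j) = H.inner (q j) (q j))) ∧
      (∀ i j : Fin n, i ≠ j → H.inner (q i) (q j) = 0) ∧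
      (∀ i j : Fin n, j < i → R i j = 0) ∧
      (∀ j : Fin n, q j = ∑ i, H.smul (w i) (Rinv i j)) ∧
      (∀ j : Fin n, ‖w j - ∑ i, H.smul (q i) (R i j)‖ ≤ ε) := by
  obtain ⟨q, R, Rinv, h1, h2, h3, h4, h5⟩ := QRMain.key H n w h_compact ε hε
  exact ⟨q, R, Rinv, h1, h2, h3, h4, h5⟩
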